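/- Let μ ≥ 0, c > 0, Q(z) = c/(2μ + √(4μ²+c) cosh(√c z)), and v = c² + 10μ²c. Then the traveling wave u(t,x) = Q(x − v·t) satisfies Q'''' − v·Q + 10(μ+Q)²Q'' + 10(μ+Q)(Q')² + 60μ³Q² + 60μ²Q³ + 30μQ⁴ + 6Q⁵ = 0 pointwise on ℝ. -/

import Mathlib

noncomputable def gardnerSoliton (μ c : ℝ) : ℝ → ℝ :=
  fun z => c / (2*μ + Real.sqrt (4*μ^2 + c) * Real.cosh (Real.sqrt c * z))

namespace GardnerAux

noncomputable def gA (μ c : ℝ) : ℝ := Real.sqrt (4*μ^2 + c)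
noncomputable def gB (c : ℝ) : ℝ := Real.sqrt c
noncomputable def gD (μ c : ℝ) (z : ℝ) : ℝ := 2*μ + gA μ c * Real.cosh (gB c * z)
noncomputable def gQ1 (μ c : ℝ) : ℝ → ℝ := fun z =>
  -(c * gA μ c * gB c * Real.sinh (gB c * z)) / (gD μ c z)^2

variable {μ c : ℝ}

lemma gA_sq (hμ : 0 ≤ μ) (hc : 0 < c) : gA μ c ^ 2 = 4*μ^2 + c :=
  Real.sq_sqrt (by positivity)

lemma gB_sq (hc : 0 < c) : gB c ^ 2 = c := Real.sq_sqrt hc.le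

lemma gA_pos (hμ : 0 ≤ μ) (hc : 0 < c) : 0 < gA μ c :=
  Real.sqrt_pos.2 (by positivity)

lemma gD_pos (hμ : 0 ≤ μ) (hc : 0 < c) (z : ℝ) : 0 < gD μ c z := by
  have h1 := Real.one_le_cosh (gB c * z)
  have h2 := gA_pos hμ hc
  unfold gD
  nlinarith

lemma gardner_eq (z : ℝ) : gardnerSoliton μ c z = c / gD μ c z := rfl

lemma hasDerivAt_gD (z : ℝ) :
    HasDerivAt (fun x => gD μ c x) (gA μ c * (Real.sinh (gB c * z) * gB c)) z := by
  have hBz : HasDerivAt (fun x : ℝ => gB c * x) (gB c) z := by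
    simpa using (hasDerivAt_id z).const_mul (gB c)
  exact (((Real.hasDerivAt_cosh (gB c * z)).comp z hBz).const_mul (gA μ c)).const_add (2*μ)

lemma hs2 (hμ : 0 ≤ μ) (hc : 0 < c) (z : ℝ) :
    gA μ c ^ 2 * Real.sinh (gB c * z) ^ 2 = gD μ c z ^ 2 - 4*μ*gD μ c z - c := by
  have h1 := Real.sinh_sq (gB c * z)
  have h2 := gA_sq hμ hc
  unfold gD
  linear_combination gA μ c ^ 2 * h1 - h2

lemma hasDerivAt_gardner (hμ : 0 ≤ μ) (hc : 0 < c) (z : ℝ) :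
    HasDerivAt (gardnerSoliton μ c) (gQ1 μ c z) z := by
  have h := (hasDerivAt_const z c).div (hasDerivAt_gD (μ := μ) (c := c) z)
    (gD_pos hμ hc z).ne'
  have e : gQ1 μ c z =
      (0 * gD μ c z - c * (gA μ c * (Real.sinh (gB c * z) * gB c))) / gD μ c z ^ 2 := by
    unfold gQ1; ring
  rw [e]
  exact h

lemma hasDerivAt_gQ1 (hμ : 0 ≤ μ) (hc : 0 < c) (z : ℝ) :
    HasDerivAt (gQ1 μ c)
      (c * gardnerSoliton μ c z - 6*μ*(gardnerSoliton μ c z)^2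
        - 2*(gardnerSoliton μ c z)^3) z := by
  have hBz : HasDerivAt (fun x : ℝ => gB c * x) (gB c) z := by
    simpa using (hasDerivAt_id z).const_mul (gB c)
  have hnum : HasDerivAt (fun x => -(c * gA μ c * gB c * Real.sinh (gB c * x)))
      (-(c * gA μ c * gB c * (Real.cosh (gB c * z) * gB c))) z :=
    (((Real.hasDerivAt_sinh (gB c * z)).comp z hBz).const_mul (c * gA μ c * gB c)).neg
  have hden : HasDerivAt (fun x => gD μ c x ^ 2)
      (2 * gD μ c z ^ 1 * (gA μ c * (Real.sinh (gB c * z) * gB c))) z :=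
    (hasDerivAt_gD z).pow 2
  have h := hnum.div hden (pow_ne_zero 2 (gD_pos hμ hc z).ne')
  have hd := (gD_pos hμ hc z).ne'
  have e : c * gardnerSoliton μ c z - 6*μ*(gardnerSoliton μ c z)^2
        - 2*(gardnerSoliton μ c z)^3 =
      (-(c * gA μ c * gB c * (Real.cosh (gB c * z) * gB c)) * gD μ c z ^ 2 -
        -(c * gA μ c * gB c * Real.sinh (gB c * z)) *
          (2 * gD μ c z ^ 1 * (gA μ c * (Real.sinh (gB c * z) * gB c)))) /
        (gD μ c z ^ 2) ^ 2 := by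
    have hnumeq : (-(c * gA μ c * gB c * (Real.cosh (gB c * z) * gB c)) * gD μ c z ^ 2 -
        -(c * gA μ c * gB c * Real.sinh (gB c * z)) *
          (2 * gD μ c z ^ 1 * (gA μ c * (Real.sinh (gB c * z) * gB c)))) =
        c^2 * gD μ c z ^3 - 6*μ*c^2*gD μ c z^2 - 2*c^3*gD μ c z := by
      have hch : gD μ c z = 2*μ + gA μ c * Real.cosh (gB c * z) := rfl
      have hB := gB_sq (c := c) hc
      have h2 := hs2 hμ hc z
      linear_combination (-(c*gD μ c z^2*(gD μ c z - 2*μ))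
          + 2*c*gD μ c z*(gD μ c z^2 - 4*μ*gD μ c z - c)) * hB
        + (c * gD μ c z^2 * gB c ^2) * hch
        + (2*c*gD μ c z*gB c^2) * h2
    rw [hnumeq, gardner_eq]
    field_simp
  rw [e]
  exact h

lemma gQ1_sq (hμ : 0 ≤ μ) (hc : 0 < c) (z : ℝ) :
    (gQ1 μ c z)^2 = c*(gardnerSoliton μ c z)^2 - 4*μ*(gardnerSoliton μ c z)^3
      - (gardnerSoliton μ c z)^4 := by
  have hd := (gD_pos hμ hc z).ne'
  have hB := gB_sq (c := c) hc
  have h2 := hs2 hμ hc z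
  unfold gQ1
  rw [gardner_eq]
  field_simp
  linear_combination (gA μ c^2 * Real.sinh (gB c * z)^2) * hB
    + c * h2

end GardnerAux

theorem soliton_fourth_order_ODE (μ c : ℝ) (hμ : 0 ≤ μ) (hc : 0 < c) :
    ∀ z : ℝ,
      iteratedDeriv 4 (gardnerSoliton μ c) z
        - (c^2 + 10*μ^2*c) * gardnerSoliton μ c z
        + 10 * (μ + gardnerSoliton μ c z)^2 * iteratedDeriv 2 (gardnerSoliton μ c) z
        + 10 * (μ + gardnerSoliton μ c z) * (deriv (gardnerSoliton μ c) z)^2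
        + 60 * μ^3 * (gardnerSoliton μ c z)^2
        + 60 * μ^2 * (gardnerSoliton μ c z)^3
        + 30 * μ * (gardnerSoliton μ c z)^4
        + 6 * (gardnerSoliton μ c z)^5 = 0 := by
  intro z
  open GardnerAux in
  have d1 : deriv (gardnerSoliton μ c) = GardnerAux.gQ1 μ c :=
    funext fun x => (GardnerAux.hasDerivAt_gardner hμ hc x).deriv
  have d2 : deriv (GardnerAux.gQ1 μ c) = fun x => c * gardnerSoliton μ c x
      - 6*μ*(gardnerSoliton μ c x)^2 - 2*(gardnerSoliton μ c x)^3 :=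
    funext fun x => (GardnerAux.hasDerivAt_gQ1 hμ hc x).deriv
  have h3 : ∀ x : ℝ, HasDerivAt (fun y => c * gardnerSoliton μ c y
      - 6*μ*(gardnerSoliton μ c y)^2 - 2*(gardnerSoliton μ c y)^3)
      ((c - 12*μ*gardnerSoliton μ c x - 6*(gardnerSoliton μ c x)^2)
        * GardnerAux.gQ1 μ c x) x := by
    intro x
    have h := GardnerAux.hasDerivAt_gardner hμ hc x
    have h' := ((h.const_mul c).sub ((h.pow 2).const_mul (6*μ))).sub
      ((h.pow 3).const_mul 2)
    refine h'.congr_deriv ?_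
    push_cast
    ring
  have d3 : deriv (fun y => c * gardnerSoliton μ c y
      - 6*μ*(gardnerSoliton μ c y)^2 - 2*(gardnerSoliton μ c y)^3)
      = fun x => (c - 12*μ*gardnerSoliton μ c x - 6*(gardnerSoliton μ c x)^2)
        * GardnerAux.gQ1 μ c x :=
    funext fun x => (h3 x).deriv
  have h4 : HasDerivAt (fun x => (c - 12*μ*gardnerSoliton μ c x
      - 6*(gardnerSoliton μ c x)^2) * GardnerAux.gQ1 μ c x)
      ((-(12*μ) - 12*gardnerSoliton μ c z) * GardnerAux.gQ1 μ c z * GardnerAux.gQ1 μ c z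
        + (c - 12*μ*gardnerSoliton μ c z - 6*(gardnerSoliton μ c z)^2)
          * (c * gardnerSoliton μ c z - 6*μ*(gardnerSoliton μ c z)^2
            - 2*(gardnerSoliton μ c z)^3)) z := by
    have h := GardnerAux.hasDerivAt_gardner hμ hc z
    have hq1 := GardnerAux.hasDerivAt_gQ1 hμ hc z
    have ha := ((hasDerivAt_const z c).sub (h.const_mul (12*μ))).sub
      ((h.pow 2).const_mul 6)
    have hm := ha.mul hq1
    refine hm.congr_deriv ?_
    simp only [Pi.sub_apply, Pi.pow_apply]
    push_cast
    ring
  have i2 : iteratedDeriv 2 (gardnerSoliton μ c) = fun x => c * gardnerSoliton μ c x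
      - 6*μ*(gardnerSoliton μ c x)^2 - 2*(gardnerSoliton μ c x)^3 := by
    rw [show (2:ℕ) = 1+1 from rfl, iteratedDeriv_succ, iteratedDeriv_one, d1, d2]
  have i4 : iteratedDeriv 4 (gardnerSoliton μ c) z
      = (-(12*μ) - 12*gardnerSoliton μ c z) * GardnerAux.gQ1 μ c z * GardnerAux.gQ1 μ c z
        + (c - 12*μ*gardnerSoliton μ c z - 6*(gardnerSoliton μ c z)^2)
          * (c * gardnerSoliton μ c z - 6*μ*(gardnerSoliton μ c z)^2
            - 2*(gardnerSoliton μ c z)^3) := by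
    have e43 : iteratedDeriv 4 (gardnerSoliton μ c)
        = deriv (iteratedDeriv 3 (gardnerSoliton μ c)) := iteratedDeriv_succ
    have e32 : iteratedDeriv 3 (gardnerSoliton μ c)
        = deriv (iteratedDeriv 2 (gardnerSoliton μ c)) := iteratedDeriv_succ
    rw [e43, e32, i2, d3]
    exact h4.deriv
  rw [i4, i2, d1]
  linear_combination (-2*μ - 2*gardnerSoliton μ c z) * GardnerAux.gQ1_sq hμ hc z
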